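/- arXiv:2306.15233 — 2 statements merged into one kernel-verified Lean document; each statement's English description precedes it below -/
import Mathlib

section
/- Fix integers B and M with M(B^2-4M) ≠ 0. If f = ax^4 + Bx^2y^2 + cy^4 with a, c ∈ ℚ, ac = M, is everywhere locally soluble (i.e., z^2 = f(x,y) has a nontrivial ℚ_v-point for every place v of ℚ) and a is an integer with 0 ≤ ord_p(a) ≤ 1 for every prime p, then c is also an integer. -/
private lemma padic_val_neg' {p : ℕ} [Fact p.Prime] (u : ℚ_[p]) :
    (-u).valuation = u.valuation := by
  rcases eq_or_ne u 0 with h | h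
  · simp [h]
  · have h1 : (-u) = ((-1 : ℤ) : ℚ_[p]) * u := by push_cast; ring
    rw [h1, Padic.valuation_mul (by simp) h, Padic.valuation_intCast]
    simp [padicValInt]

private lemma padic_val_add' {p : ℕ} [Fact p.Prime] {u w : ℚ_[p]} (hw : w ≠ 0)
    (h : u = 0 ∨ (u ≠ 0 ∧ w.valuation < u.valuation)) :
    u + w ≠ 0 ∧ (u + w).valuation = w.valuation := by
  rcases h with h | ⟨hu, hlt⟩
  · simp [h, hw]
  · have hne : u + w ≠ 0 := by
      intro h0
      have : u = -w := by linear_combination h0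
      rw [this, padic_val_neg'] at hlt
      exact lt_irrefl _ hlt
    refine ⟨hne, ?_⟩
    have h1 : min u.valuation w.valuation ≤ (u + w).valuation :=
      Padic.le_valuation_add hne
    have h2 : min (u + w).valuation (-u).valuation ≤ w.valuation := by
      have he : (u + w) + (-u) = w := by ring
      have := Padic.le_valuation_add (x := u + w) (y := -u) (by rw [he]; exact hw)
      rwa [he] at this
    rw [padic_val_neg'] at h2
    rw [min_eq_right hlt.le] at h1
    rcases min_le_iff.mp h2 with h3 | h3
    · omega
    · omega

private lemma padic_val_pow4' {p : ℕ} [Fact p.Prime] {x : ℚ_[p]} (hx : x ≠ 0) :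
    (x ^ 4).valuation = 4 * x.valuation := by
  have h : x ^ 4 = x * x * (x * x) := by ring
  rw [h, Padic.valuation_mul (mul_ne_zero hx hx) (mul_ne_zero hx hx),
    Padic.valuation_mul hx hx]
  ring

private lemma padic_core {p : ℕ} [Fact p.Prime] {A C : ℚ_[p]} {Bq : ℚ_[p]}
    (hA : A ≠ 0) (hC : C ≠ 0) (vA : A.valuation = 1) (vC : C.valuation = -1)
    (vB : Bq = 0 ∨ 0 ≤ Bq.valuation)
    (x y z : ℚ_[p]) (hxy : ¬(x = 0 ∧ y = 0))
    (hz : z ^ 2 = A * x ^ 4 + Bq * x ^ 2 * y ^ 2 + C * y ^ 4) : False := by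
  -- valuation of z^2 is even; we show RHS nonzero with odd valuation
  have oddval : ∀ w : ℚ_[p], w ≠ 0 → ¬ (z ^ 2 = w ∧ Odd w.valuation) := by
    rintro w hwne ⟨hzw, k, hk⟩
    have hzne : z ≠ 0 := by rintro rfl; simp at hzw; exact hwne hzw.symm
    have h2 : (z ^ 2).valuation = 2 * z.valuation := by
      have : z ^ 2 = z * z := sq z
      rw [this, Padic.valuation_mul hzne hzne]; ring
    rw [hzw] at h2
    omega
  rcases eq_or_ne x 0 with rfl | hx
  · have hy : y ≠ 0 := fun h => hxy ⟨rfl, h⟩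
    have hC4 : C * y ^ 4 ≠ 0 := mul_ne_zero hC (pow_ne_zero _ hy)
    refine oddval _ hC4 ⟨by rw [hz]; ring, ?_⟩
    rw [Padic.valuation_mul hC (pow_ne_zero _ hy), vC, padic_val_pow4' hy]
    exact ⟨2 * y.valuation - 1, by ring⟩
  rcases eq_or_ne y 0 with rfl | hy
  · have hA4 : A * x ^ 4 ≠ 0 := mul_ne_zero hA (pow_ne_zero _ hx)
    refine oddval _ hA4 ⟨by rw [hz]; ring, ?_⟩
    rw [Padic.valuation_mul hA (pow_ne_zero _ hx), vA, padic_val_pow4' hx]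
    exact ⟨2 * x.valuation, by ring⟩
  -- both nonzero
  set m := x.valuation with hm
  set n := y.valuation with hn
  set T1 := A * x ^ 4 with hT1d
  set T2 := Bq * x ^ 2 * y ^ 2 with hT2d
  set T3 := C * y ^ 4 with hT3d
  have hT1 : T1 ≠ 0 := mul_ne_zero hA (pow_ne_zero _ hx)
  have hT3 : T3 ≠ 0 := mul_ne_zero hC (pow_ne_zero _ hy)
  have vT1 : T1.valuation = 1 + 4 * m := by
    rw [hT1d, Padic.valuation_mul hA (pow_ne_zero _ hx), vA, padic_val_pow4' hx]
  have vT3 : T3.valuation = -1 + 4 * n := by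
    rw [hT3d, Padic.valuation_mul hC (pow_ne_zero _ hy), vC, padic_val_pow4' hy]
  have vx2 : (x ^ 2).valuation = 2 * m := by
    rw [sq x, Padic.valuation_mul hx hx]; ring
  have vy2 : (y ^ 2).valuation = 2 * n := by
    rw [sq y, Padic.valuation_mul hy hy]; ring
  have hT2 : T2 = 0 ∨ (T2 ≠ 0 ∧ 2 * m + 2 * n ≤ T2.valuation) := by
    rcases eq_or_ne Bq 0 with hB0 | hBne
    · left; rw [hT2d, hB0]; ring
    · right
      have hvB : 0 ≤ Bq.valuation := vB.resolve_left hBne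
      have h1 : Bq * x ^ 2 ≠ 0 := mul_ne_zero hBne (pow_ne_zero _ hx)
      refine ⟨mul_ne_zero h1 (pow_ne_zero _ hy), ?_⟩
      rw [hT2d, Padic.valuation_mul h1 (pow_ne_zero _ hy),
        Padic.valuation_mul hBne (pow_ne_zero _ hx), vx2, vy2]
      omega
  rcases le_or_gt n m with hnm | hmn
  · -- y has smaller valuation; dominant term T3, valuation -1 + 4n
    have h12 : T1 + T2 = 0 ∨ (T1 + T2 ≠ 0 ∧ T3.valuation < (T1 + T2).valuation) := by
      rcases eq_or_ne (T1 + T2) 0 with h0 | h0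
      · exact Or.inl h0
      · refine Or.inr ⟨h0, ?_⟩
        rcases hT2 with h2 | ⟨h2ne, h2v⟩
        · rw [h2, add_zero] at h0 ⊢; omega
        · have h3 := Padic.le_valuation_add (x := T1) (y := T2) h0
          rcases le_total T1.valuation T2.valuation with h4 | h4
          · rw [min_eq_left h4] at h3; omega
          · rw [min_eq_right h4] at h3; omega
    obtain ⟨hne, hval⟩ := padic_val_add' hT3 h12
    exact oddval _ hne ⟨hz, by rw [hval, vT3]; exact ⟨2 * n - 1, by ring⟩⟩
  · -- x has smaller valuation; dominant term T1, valuation 1 + 4m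
    have h12 : T2 + T1 ≠ 0 ∧ (T2 + T1).valuation = T1.valuation := by
      apply padic_val_add' hT1
      rcases hT2 with h2 | ⟨h2ne, h2v⟩
      · exact Or.inl h2
      · exact Or.inr ⟨h2ne, by omega⟩
    have h123 : T3 + (T1 + T2) ≠ 0 ∧ (T3 + (T1 + T2)).valuation = (T1 + T2).valuation := by
      rw [add_comm T1 T2]
      apply padic_val_add' h12.1
      refine Or.inr ⟨hT3, ?_⟩
      rw [h12.2]; omega
    have hval : (T1 + T2 + T3).valuation = 1 + 4 * m := by
      rw [add_comm (T1 + T2) T3, h123.2, add_comm T1 T2, h12.2, vT1]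
    have hne : T1 + T2 + T3 ≠ 0 := by rw [add_comm (T1 + T2) T3] at *; exact h123.1
    exact oddval _ hne ⟨hz, by rw [hval]; exact ⟨2 * m, by ring⟩⟩

/-- Integrality lemma: fix integers `B, M` with `M (B² - 4M) ≠ 0`.  If
`f = a x⁴ + B x² y² + c y⁴` with `a, c ∈ ℚ`, `a c = M`, is everywhere locally
soluble, and `a` is an integer with `0 ≤ ord_p a ≤ 1` for all primes `p`, then
`c` is an integer. -/
theorem integrality_lemma (B M : ℤ) (hM : M * (B ^ 2 - 4 * M) ≠ 0)
    (a : ℤ) (c : ℚ) (hac : (a : ℚ) * c = (M : ℚ))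
    (ha : ∀ p : ℕ, p.Prime → padicValInt p a ≤ 1)
    (hreal : ∃ x y z : ℝ, ¬ (x = 0 ∧ y = 0) ∧
      z ^ 2 = (a : ℝ) * x ^ 4 + (B : ℝ) * x ^ 2 * y ^ 2 + (c : ℝ) * y ^ 4)
    (hpadic : ∀ (p : ℕ) [Fact p.Prime], ∃ x y z : ℚ_[p], ¬ (x = 0 ∧ y = 0) ∧
      z ^ 2 = (a : ℚ_[p]) * x ^ 4 + (B : ℚ_[p]) * x ^ 2 * y ^ 2 + (c : ℚ_[p]) * y ^ 4) :
    ∃ cz : ℤ, c = (cz : ℚ) := by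
  have hMne : M ≠ 0 := fun h => hM (by rw [h]; ring)
  have haQ : (a : ℚ) ≠ 0 := by
    intro h
    rw [h, zero_mul] at hac
    exact hMne (by exact_mod_cast hac.symm)
  have ha0 : a ≠ 0 := by exact_mod_cast haQ
  have hc0 : c ≠ 0 := by
    intro h; rw [h, mul_zero] at hac; exact hMne (by exact_mod_cast hac.symm)
  have key : ∀ p : ℕ, p.Prime → (p : ℤ) ∣ a → (p : ℤ) ∣ M := by
    intro p hp hpa
    by_contra hpM
    haveI : Fact p.Prime := ⟨hp⟩
    have vpa : padicValInt p a = 1 := by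
      have h1 : 1 ≤ padicValInt p a := by
        have h := (padicValInt_dvd_iff 1 a).mp (by simpa using hpa)
        rcases h with h | h
        · exact absurd h ha0
        · exact h
      have h2 := ha p hp
      omega
    have hAne : ((a : ℤ) : ℚ_[p]) ≠ 0 := Int.cast_ne_zero.mpr ha0
    have hCne : ((c : ℚ) : ℚ_[p]) ≠ 0 := by
      simpa using (Rat.cast_ne_zero (α := ℚ_[p])).mpr hc0
    have vA : ((a : ℤ) : ℚ_[p]).valuation = 1 := by
      rw [Padic.valuation_intCast, vpa]; rfl
    have hacp : ((a : ℤ) : ℚ_[p]) * ((c : ℚ) : ℚ_[p]) = ((M : ℤ) : ℚ_[p]) := by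
      have h := congrArg (fun q : ℚ => (q : ℚ_[p])) hac
      push_cast at h
      exact h
    have vC : ((c : ℚ) : ℚ_[p]).valuation = -1 := by
      have h := Padic.valuation_mul hAne hCne
      rw [hacp, Padic.valuation_intCast, padicValInt.eq_zero_of_not_dvd hpM, vA] at h
      simp only [Padic.valuation_ratCast] at h ⊢; push_cast at h; linarith
    have vB : ((B : ℤ) : ℚ_[p]) = 0 ∨ 0 ≤ ((B : ℤ) : ℚ_[p]).valuation :=
      Or.inr (by rw [Padic.valuation_intCast]; exact Int.natCast_nonneg _)
    obtain ⟨x, y, z, hxy, hz⟩ := hpadic p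
    exact padic_core hAne hCne vA vC vB x y z hxy hz
  have hdvd : a ∣ M := by
    rw [← Int.natAbs_dvd_natAbs,
      ← Nat.factorization_le_iff_dvd (Int.natAbs_ne_zero.mpr ha0) (Int.natAbs_ne_zero.mpr hMne)]
    rw [Finsupp.le_def]
    intro p
    by_cases hp : p.Prime
    · rw [Nat.factorization_def _ hp, Nat.factorization_def _ hp]
      by_cases hpa : (p : ℤ) ∣ a
      · have h1 := key p hp hpa
        haveI : Fact p.Prime := ⟨hp⟩
        have h2 : 1 ≤ padicValInt p M := by
          have h := (padicValInt_dvd_iff 1 M).mp (by simpa using h1)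
          rcases h with h | h
          · exact absurd h hMne
          · exact h
        have h3 := ha p hp
        unfold padicValInt at h2 h3
        omega
      · have h4 : padicValInt p a = 0 := padicValInt.eq_zero_of_not_dvd hpa
        unfold padicValInt at h4
        omega
    · simp [Nat.factorization_eq_zero_of_not_prime _ hp]
  obtain ⟨k, hk⟩ := hdvd
  refine ⟨k, ?_⟩
  have h : (a : ℚ) * c = (a : ℚ) * (k : ℚ) := by
    rw [hac, hk]; push_cast; ring
  exact mul_left_cancel₀ haQ h
end

section
/- Let n > 1 be a squarefree integer, E_n : y^2 = x^3 - n^2 x, and let φ̂_1 : E_{1,n} → E_n be the dual 2-isogeny as above. Then #( E_n(ℚ) / φ̂_1(E_{1,n}(ℚ)) ) ≥ 4, and if rank(E_n(ℚ)) ≥ 1 and E_{1,n}(ℚ)/φ_1(E_n(ℚ)) is trivial, then #( E_n(ℚ) / φ̂_1(E_{1,n}(ℚ)) ) ≥ 8. -/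
open WeierstrassCurve

/-- The curve `Eₙ : y² = x³ - n² x` over `ℚ`. -/
def En (n : ℤ) : WeierstrassCurve.Affine ℚ :=
  { a₁ := 0, a₂ := 0, a₃ := 0, a₄ := -(n : ℚ) ^ 2, a₆ := 0 }

/-- The curve `E₁,ₙ : y² = x³ + 4n² x` over `ℚ`. -/
def E1n (n : ℤ) : WeierstrassCurve.Affine ℚ :=
  { a₁ := 0, a₂ := 0, a₃ := 0, a₄ := 4 * (n : ℚ) ^ 2, a₆ := 0 }

section Aux

variable {n : ℤ}

lemma n_cast_ne (hn : 1 < n) : (n : ℚ) ≠ 0 := by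
  exact_mod_cast (by omega : n ≠ 0)

lemma En_ns (hn : 1 < n) {x : ℚ} (hx : x ^ 3 - (n:ℚ)^2 * x = 0)
    (hne : 3 * x ^ 2 ≠ (n:ℚ)^2) : (En n).Nonsingular x 0 := by
  rw [WeierstrassCurve.Affine.nonsingular_iff, WeierstrassCurve.Affine.equation_iff]
  simp only [En]
  exact ⟨by ring_nf; ring_nf at hx; linarith, Or.inl fun h => hne (by linarith)⟩

lemma En_ns_zero (hn : 1 < n) : (En n).Nonsingular 0 0 :=
  En_ns hn (by ring) (by
    intro h
    exact pow_ne_zero 2 (n_cast_ne hn) (by linarith))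

lemma En_ns_n (hn : 1 < n) : (En n).Nonsingular (n : ℚ) 0 :=
  En_ns hn (by ring) (by
    intro h
    exact pow_ne_zero 2 (n_cast_ne hn) (by nlinarith))

lemma En_ns_neg_n (hn : 1 < n) : (En n).Nonsingular (-(n : ℚ)) 0 :=
  En_ns hn (by ring) (by
    intro h
    exact pow_ne_zero 2 (n_cast_ne hn) (by nlinarith))

lemma En_negY (x : ℚ) : (En n).negY x 0 = 0 := by
  simp [WeierstrassCurve.Affine.negY, En]

lemma E1n_negY (x y : ℚ) : (E1n n).negY x y = -y := by
  simp [WeierstrassCurve.Affine.negY, E1n]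

/-- A point `(x, 0)` on `Eₙ` is `2`-torsion. -/
lemma En_two_tor {x : ℚ} (h : (En n).Nonsingular x 0) :
    Affine.Point.some _ _ h + Affine.Point.some _ _ h = 0 :=
  Affine.Point.add_self_of_Y_eq (by rw [En_negY])

/-- Squarefree `n > 1` is not a square. -/
lemma not_isSquare (hn : 1 < n) (hsf : Squarefree n) : ¬ IsSquare n := by
  rintro ⟨j, hj⟩
  have : IsUnit j := hsf j (by rw [hj])
  rcases Int.isUnit_iff.mp this with h | h <;> subst h <;> simp at hj <;> omega

/-- The arithmetic core: no rational point of `E₁,ₙ` doubles to `(0, 0)`. -/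
lemma core (hn : 1 < n) (hsf : Squarefree n) {x y : ℚ} (hy : y ≠ 0)
    (heq : y ^ 2 = x ^ 3 + 4 * (n:ℚ) ^ 2 * x)
    (hx : ((3 * x ^ 2 + 4 * (n:ℚ) ^ 2) / (2 * y)) ^ 2 - 2 * x = 0) : False := by
  have hn0 : (n : ℚ) ≠ 0 := n_cast_ne hn
  have hnpos : (0 : ℚ) < n := by exact_mod_cast (by omega : (0:ℤ) < n)
  have h1 : (3 * x ^ 2 + 4 * (n:ℚ) ^ 2) ^ 2 = 8 * x * y ^ 2 := by
    have h2 : ((3 * x ^ 2 + 4 * (n:ℚ) ^ 2) / (2 * y)) ^ 2 = 2 * x := by linarith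
    field_simp at h2
    linarith
  have key : (x ^ 2 - 4 * (n:ℚ) ^ 2) ^ 2 = 0 := by linear_combination h1 + 8 * x * heq
  have key2 : x ^ 2 - 4 * (n:ℚ) ^ 2 = 0 :=
    pow_eq_zero_iff (n := 2) (by norm_num) |>.mp key
  have : (x - 2 * n) * (x + 2 * n) = 0 := by linear_combination key2
  rcases mul_eq_zero.mp this with h | h
  · -- x = 2n, so y² = 16n³, so n is a square
    have hx2 : x = 2 * n := by linarith
    have hsq : IsSquare ((n : ℚ)) := by
      refine ⟨y / (4 * n), ?_⟩
      have h4 : (4 : ℚ) * n ≠ 0 := by positivity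
      field_simp
      subst hx2
      linear_combination -heq
    exact not_isSquare hn hsf (Rat.isSquare_intCast_iff.mp hsq)
  · -- x = -2n, so y² = -16n³ < 0
    have hx2 : x = -(2 * n) := by linarith
    subst hx2
    nlinarith [sq_nonneg y, pow_pos hnpos 3]

/-- `E₁,ₙ(ℚ)` has no point doubling to `(0,0)`. -/
lemma E1n_no_half (hn : 1 < n) (hsf : Squarefree n) (Q : (E1n n).Point)
    {h00 : (E1n n).Nonsingular 0 0} : Q + Q ≠ Affine.Point.some _ _ h00 := by
  rcases Q with _ | @⟨x, y, h⟩
  · rw [show (Affine.Point.zero : (E1n n).Point) = 0 from rfl, add_zero]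
    exact fun hc => Affine.Point.some_ne_zero h00 hc.symm
  · by_cases hy : y = (E1n n).negY x y
    · rw [Affine.Point.add_self_of_Y_eq hy]
      exact fun hc => Affine.Point.some_ne_zero h00 hc.symm
    · rw [Affine.Point.add_self_of_Y_ne hy]
      intro hc
      rw [Affine.Point.some.injEq] at hc
      obtain ⟨hcx, -⟩ := hc
      have hy0 : y ≠ 0 := by
        intro h0
        exact hy (by rw [E1n_negY, h0, neg_zero])
      have heq : y ^ 2 = x ^ 3 + 4 * (n:ℚ) ^ 2 * x := by
        have := h.1
        rw [WeierstrassCurve.Affine.equation_iff] at this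
        simp only [E1n] at this
        linarith
      set L := (E1n n).slope x x y y with hL
      have hslope : L = (3 * x ^ 2 + 4 * (n:ℚ) ^ 2) / (2 * y) := by
        rw [hL, Affine.slope_of_Y_ne rfl hy, E1n_negY]
        rw [show (E1n n).a₂ = 0 from rfl, show (E1n n).a₄ = 4 * (n:ℚ)^2 from rfl,
          show (E1n n).a₁ = 0 from rfl]
        ring_nf
      apply core hn hsf hy0 heq
      rw [← hslope]
      have h' : L ^ 2 + (E1n n).a₁ * L - (E1n n).a₂ - x - x = 0 := hcx
      rw [show (E1n n).a₁ = 0 from rfl, show (E1n n).a₂ = 0 from rfl] at h'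
      linarith

/-- The only `2`-torsion points of `E₁,ₙ(ℚ)` are `0` and `(0,0)`. -/
lemma E1n_two_tor (hn : 1 < n) (Q : (E1n n).Point) (h2 : Q + Q = 0) :
    Q = 0 ∨ ∃ h : (E1n n).Nonsingular 0 0, Q = Affine.Point.some _ _ h := by
  rcases Q with _ | @⟨x, y, h⟩
  · exact Or.inl rfl
  · right
    by_cases hy : y = (E1n n).negY x y
    · rw [E1n_negY] at hy
      have hy0 : y = 0 := by linarith
      subst hy0
      have heq : x ^ 3 + 4 * (n:ℚ) ^ 2 * x = 0 := by
        have := h.1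
        rw [WeierstrassCurve.Affine.equation_iff] at this
        simp only [E1n] at this
        linarith
      have hx0 : x = 0 := by
        rcases mul_eq_zero.mp (show x * (x ^ 2 + 4 * (n:ℚ) ^ 2) = 0 by linarith) with h' | h'
        · exact h'
        · have hn0 : (n:ℚ) ≠ 0 := n_cast_ne hn
          nlinarith [sq_nonneg x, pow_ne_zero 2 hn0, sq_nonneg ((n:ℚ))]
      subst hx0
      exact ⟨h, rfl⟩
    · exfalso
      rw [Affine.Point.add_self_of_Y_ne hy] at h2
      exact Affine.Point.some_ne_zero _ h2

end Aux

/-- For squarefree `n > 1`, with `φ = φ₁ : Eₙ → E₁,ₙ` the `2`-isogeny with kernel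
`{∞, (0,0)}`, `ψ = φ̂₁` its dual (with kernel `{∞, (0,0)}` on rational points),
and `Eₙ(ℚ) ≅ T × ℤʳ` with `T` finite (so `r = rank Eₙ(ℚ)`):
`#(Eₙ(ℚ)/φ̂₁(E₁,ₙ(ℚ))) ≥ 4`; and if `rank Eₙ(ℚ) ≥ 1` and `E₁,ₙ(ℚ)/φ₁(Eₙ(ℚ))` is
trivial, then `#(Eₙ(ℚ)/φ̂₁(E₁,ₙ(ℚ))) ≥ 8`. -/
theorem card_coker_dual_isogeny_lower_bound (n : ℤ) (hn : 1 < n) (hsf : Squarefree n)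
    (T : Type*) [AddCommGroup T] [Finite T] (r : ℕ)
    (e : (En n).Point ≃+ T × (Fin r → ℤ))
    (φ : (En n).Point →+ (E1n n).Point) (ψ : (E1n n).Point →+ (En n).Point)
    (hψφ : ∀ P, ψ (φ P) = 2 • P) (hφψ : ∀ Q, φ (ψ Q) = 2 • Q)
    (hkerφ : ∀ P, φ P = 0 ↔ P = 0 ∨ ∃ h : (En n).Nonsingular 0 0, P = .some 0 0 h)
    (hkerψ : ∀ Q, ψ Q = 0 ↔ Q = 0 ∨ ∃ h : (E1n n).Nonsingular 0 0, Q = .some 0 0 h) :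
    4 ≤ Nat.card ((En n).Point ⧸ ψ.range) ∧
      (1 ≤ r → (∀ Q : (E1n n).Point, Q ∈ φ.range) →
        8 ≤ Nat.card ((En n).Point ⧸ ψ.range)) := by
  set G := (En n).Point
  set H := ψ.range with hH
  -- doubles are in the range of ψ
  have h2mem : ∀ P : G, P + P ∈ H := fun P => ⟨φ P, by rw [hψφ, two_nsmul]⟩
  -- key: no nonzero 2-torsion point lies in the range of ψ
  have hK : ∀ P : G, P ∈ H → P + P = 0 → P = 0 := by
    rintro P ⟨Q, rfl⟩ h2
    have hQQ : ψ (Q + Q) = 0 := by rw [map_add]; exact h2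
    rcases (hkerψ (Q + Q)).mp hQQ with hQ2 | ⟨h00, hQ2⟩
    · rcases E1n_two_tor hn Q hQ2 with rfl | ⟨h00, rfl⟩
      · exact map_zero ψ
      · exact (hkerψ _).mpr (Or.inr ⟨h00, rfl⟩)
    · exact absurd hQ2 (E1n_no_half hn hsf Q)
  -- the four 2-torsion points of Eₙ
  set v : Fin 4 → G := ![0, Affine.Point.some _ _ (En_ns_zero hn),
    Affine.Point.some _ _ (En_ns_n hn), Affine.Point.some _ _ (En_ns_neg_n hn)] with hv
  have hv0 : v 0 = 0 := rfl
  have hv1 : v 1 = Affine.Point.some _ _ (En_ns_zero hn) := rfl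
  have hv2 : v 2 = Affine.Point.some _ _ (En_ns_n hn) := rfl
  have hv3 : v 3 = Affine.Point.some _ _ (En_ns_neg_n hn) := rfl
  have hvtor : ∀ i, v i + v i = 0 := by
    intro i
    fin_cases i
    · exact add_zero 0
    · exact En_two_tor _
    · exact En_two_tor _
    · exact En_two_tor _
  have hn0 : (n : ℚ) ≠ 0 := n_cast_ne hn
  have hsome_ne : ∀ {x₁ y₁ x₂ y₂ : ℚ} (h₁ : (En n).Nonsingular x₁ y₁)
      (h₂ : (En n).Nonsingular x₂ y₂), x₁ ≠ x₂ →
      (Affine.Point.some _ _ h₁ : G) ≠ Affine.Point.some _ _ h₂ := by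
    intro x₁ y₁ x₂ y₂ h₁ h₂ hx hc
    rw [Affine.Point.some.injEq] at hc
    exact hx hc.1
  have d01 : v 0 ≠ v 1 := by
    rw [hv0, hv1]; exact (Affine.Point.some_ne_zero _).symm
  have d02 : v 0 ≠ v 2 := by
    rw [hv0, hv2]; exact (Affine.Point.some_ne_zero _).symm
  have d03 : v 0 ≠ v 3 := by
    rw [hv0, hv3]; exact (Affine.Point.some_ne_zero _).symm
  have d12 : v 1 ≠ v 2 := by
    rw [hv1, hv2]; exact hsome_ne _ _ fun h => hn0 h.symm
  have d13 : v 1 ≠ v 3 := by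
    rw [hv1, hv3]; exact hsome_ne _ _ fun h => hn0 (by linarith)
  have d23 : v 2 ≠ v 3 := by
    rw [hv2, hv3]; exact hsome_ne _ _ fun h => hn0 (by linarith)
  have hvinj : Function.Injective v := by
    intro i j hij
    fin_cases i <;> fin_cases j <;>
      first
        | rfl
        | exact absurd hij d01 | exact absurd hij d02 | exact absurd hij d03
        | exact absurd hij d12 | exact absurd hij d13 | exact absurd hij d23
        | exact absurd hij.symm d01 | exact absurd hij.symm d02
        | exact absurd hij.symm d03 | exact absurd hij.symm d12
        | exact absurd hij.symm d13 | exact absurd hij.symm d23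
  -- the quotient is finite
  haveI hfin : Finite (G ⧸ H) := by
    have hsurj : Function.Surjective
        (fun p : T × (Fin r → ZMod 2) =>
          (QuotientAddGroup.mk (e.symm (p.1, fun i => ((p.2 i).val : ℤ))) : G ⧸ H)) := by
      intro q
      induction q using QuotientAddGroup.induction_on with
      | H P =>
        refine ⟨((e P).1, fun i => ((e P).2 i : ZMod 2)), ?_⟩
        rw [QuotientAddGroup.eq]
        have hdvd : ∀ i : Fin r, (2:ℤ) ∣ (e P).2 i - (((e P).2 i : ZMod 2).val : ℤ) := by
          intro i
          have h5 : ((((e P).2 i : ZMod 2).val : ℕ) : ZMod 2) = ((e P).2 i : ZMod 2) := by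
            simp [ZMod.natCast_val, ZMod.cast_id]
          have h6 : (((e P).2 i - (((e P).2 i : ZMod 2).val : ℤ) : ℤ) : ZMod 2) = 0 := by
            push_cast
            rw [h5]
            ring
          exact_mod_cast (ZMod.intCast_zmod_eq_zero_iff_dvd _ 2).mp h6
        set w : Fin r → ℤ := fun i => ((e P).2 i - (((e P).2 i : ZMod 2).val : ℤ)) / 2 with hwd
        have hw2 : ∀ i, 2 * w i = (e P).2 i - (((e P).2 i : ZMod 2).val : ℤ) := by
          intro i
          exact Int.mul_ediv_cancel' (hdvd i)
        have hkey : -(e.symm ((e P).1, fun i => (((e P).2 i : ZMod 2).val : ℤ))) + P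
            = e.symm (0, w) + e.symm (0, w) := by
          apply e.injective
          simp only [map_add, map_neg, AddEquiv.apply_symm_apply]
          ext
          · simp
          · rename_i i
            simp only [Prod.snd_add, Prod.snd_neg, Pi.add_apply, Pi.neg_apply]
            have := hw2 i
            linarith
        rw [hkey]
        exact h2mem _
    exact Finite.of_surjective _ hsurj
  -- injectivity of the 4 cosets
  have hqinj : Function.Injective (fun i => (QuotientAddGroup.mk (v i) : G ⧸ H)) := by
    intro i j hij
    simp only at hij
    rw [QuotientAddGroup.eq] at hij
    have hd2 : (-(v i) + v j) + (-(v i) + v j) = 0 := by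
      have hti := hvtor i
      have htj := hvtor j
      have : (-(v i) + v j) + (-(v i) + v j) = -(v i + v i) + (v j + v j) := by abel
      rw [this, hti, htj, neg_zero, zero_add]
    have h0 := hK _ hij hd2
    exact hvinj (neg_add_eq_zero.mp h0)
  refine ⟨?_, ?_⟩
  · calc (4 : ℕ) = Nat.card (Fin 4) := by simp
    _ ≤ Nat.card (G ⧸ H) := Nat.card_le_card_of_injective _ hqinj
  · intro hr hφsurj
    -- every element of the range of ψ is a double
    have hHdouble : ∀ P : G, P ∈ H → ∃ P', P = P' + P' := by
      rintro P ⟨Q, rfl⟩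
      obtain ⟨P', rfl⟩ := hφsurj Q
      exact ⟨P', by rw [hψφ, two_nsmul]⟩
    set i0 : Fin r := ⟨0, hr⟩ with hi0
    set S : G →+ (Fin r → ℤ) :=
      (AddMonoidHom.snd T (Fin r → ℤ)).comp e.toAddMonoidHom with hS
    have hS2 : ∀ P : G, P + P = 0 → S P = 0 := by
      intro P hP
      have h2 : S P + S P = 0 := by rw [← map_add, hP, map_zero]
      ext i
      have h3 := congrFun h2 i
      simp only [Pi.add_apply, Pi.zero_apply] at h3 ⊢
      omega
    set g : G := e.symm (0, Pi.single i0 1) with hg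
    have hSg : S g = Pi.single i0 1 := by
      rw [hg, hS]
      simp
    have heven : ∀ P : G, P ∈ H → (2:ℤ) ∣ S P i0 := by
      intro P hP
      obtain ⟨P', rfl⟩ := hHdouble P hP
      refine ⟨S P' i0, ?_⟩
      rw [map_add]
      simp [two_mul]
    set w : Fin 4 × Fin 2 → G := fun p => v p.1 + (p.2 : ℕ) • g with hw
    have hwinj : Function.Injective (fun p => (QuotientAddGroup.mk (w p) : G ⧸ H)) := by
      rintro ⟨a1, a2⟩ ⟨b1, b2⟩ hab
      simp only at hab
      rw [QuotientAddGroup.eq] at hab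
      have hfirst : ∀ (h1 : -(v a1) + v b1 ∈ H), a1 = b1 := by
        intro h1
        have hd2 : (-(v a1) + v b1) + (-(v a1) + v b1) = 0 := by
          have : (-(v a1) + v b1) + (-(v a1) + v b1) = -(v a1 + v a1) + (v b1 + v b1) := by abel
          rw [this, hvtor a1, hvtor b1, neg_zero, zero_add]
        exact hvinj (neg_add_eq_zero.mp (hK _ h1 hd2))
      have hSv : ∀ j, S (v j) = 0 := fun j => hS2 _ (hvtor j)
      fin_cases a2 <;> fin_cases b2 <;>
        simp only [hw, Fin.isValue, Fin.val_zero, Fin.val_one, zero_nsmul, one_nsmul,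
          zero_smul, one_smul, add_zero] at hab
      · exact Prod.ext (hfirst hab) rfl
      · -- a2 = 0, b2 = 1 : parity contradiction
        exfalso
        have h2 := heven _ hab
        have h9 : S (-(v a1) + (v b1 + g)) i0 = 1 := by
          rw [map_add, map_add, map_neg, hSv, hSv, hSg]
          simp
        rw [h9] at h2
        norm_num at h2
      · exfalso
        have h2 := heven _ hab
        have h9 : S (-(v a1 + g) + v b1) i0 = -1 := by
          rw [map_add, map_neg, map_add, hSv, hSv, hSg]
          simp
        rw [h9] at h2
        norm_num at h2
      · have h1 : -(v a1) + v b1 ∈ H := by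
          have : -(v a1 + g) + (v b1 + g) = -(v a1) + v b1 := by abel
          rwa [this] at hab
        exact Prod.ext (hfirst h1) rfl
    calc (8 : ℕ) = Nat.card (Fin 4 × Fin 2) := by simp
    _ ≤ Nat.card (G ⧸ H) := Nat.card_le_card_of_injective _ hwinj
end
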